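/- Let 𝔤 be a finite-dimensional Lie algebra over a field of characteristic zero and fix a ∈ 𝔤*. For F, G invariant polynomials in S(𝔤)^𝔤 (i.e., {F, x} = 0 and {G, x} = 0 for all x ∈ 𝔤), all the directional derivatives ∂_a^k F and ∂_a^m G pairwise Poisson-commute with respect to the Kirillov bracket on S(𝔤): {∂_a^k F, ∂_a^m G} = 0 for all k, m ≥ 0. -/

import Mathlib

open MvPolynomial

variable {F : Type*} [Field F] [CharZero F]
variable {ι : Type*} [Fintype ι] [DecidableEq ι]
variable {g : Type*} [LieRing g] [LieAlgebra F g]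

/-- The linear polynomial on 𝔤* corresponding to `v ∈ 𝔤` (in the coordinates
given by the basis `b`), i.e. the function ξ ↦ ξ(v). -/
noncomputable def linPoly (b : Module.Basis ι F g) (v : g) : MvPolynomial ι F :=
  ∑ i, MvPolynomial.C (b.repr v i) * MvPolynomial.X i

/-- The Kirillov Poisson bracket on S(𝔤) = F[𝔤*]:
{f,p}(ξ) = ξ([d_ξ f, d_ξ p]) = ∑ᵢⱼ ∂ᵢf ∂ⱼp · ξ(⁅bᵢ,bⱼ⁆). -/
noncomputable def kirillovBracket (b : Module.Basis ι F g) (f p : MvPolynomial ι F) :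
    MvPolynomial ι F :=
  ∑ i, ∑ j, pderiv i f * pderiv j p * linPoly b ⁅b i, b j⁆

/-- The directional derivative ∂_a on S(𝔤) in the direction a ∈ 𝔤*. -/
noncomputable def dirDeriv (b : Module.Basis ι F g) (a : Module.Dual F g)
    (f : MvPolynomial ι F) : MvPolynomial ι F :=
  ∑ i, a (b i) • pderiv i f

set_option linter.unusedSectionVars false

lemma pderiv_comm' (i j : ι) (f : MvPolynomial ι F) :
    pderiv i (pderiv j f) = pderiv j (pderiv i f) := by
  induction f using MvPolynomial.induction_on' with
  | add p q hp hq => simp [map_add, hp, hq]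
  | monomial s c =>
    rcases eq_or_ne i j with rfl | hij
    · rfl
    · simp only [pderiv_monomial]
      rw [tsub_tsub, tsub_tsub, add_comm]
      congr 1
      rw [Finsupp.tsub_apply, Finsupp.tsub_apply, Finsupp.single_apply,
        Finsupp.single_apply, if_neg hij, if_neg (Ne.symm hij), tsub_zero, tsub_zero]
      ring

lemma dirDeriv_C (b : Module.Basis ι F g) (a : Module.Dual F g) (c : F) :
    dirDeriv b a (C c) = 0 := by simp [dirDeriv]

lemma dirDeriv_add (b : Module.Basis ι F g) (a : Module.Dual F g) (f p : MvPolynomial ι F) :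
    dirDeriv b a (f + p) = dirDeriv b a f + dirDeriv b a p := by
  simp [dirDeriv, smul_add, Finset.sum_add_distrib]

lemma dirDeriv_sum (b : Module.Basis ι F g) (a : Module.Dual F g) {σ : Type*} (s : Finset σ)
    (f : σ → MvPolynomial ι F) :
    dirDeriv b a (∑ x ∈ s, f x) = ∑ x ∈ s, dirDeriv b a (f x) := by
  simp [dirDeriv, Finset.smul_sum]
  rw [Finset.sum_comm]

lemma dirDeriv_smul (b : Module.Basis ι F g) (a : Module.Dual F g) (c : F) (f : MvPolynomial ι F) :
    dirDeriv b a (c • f) = c • dirDeriv b a f := by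
  simp [dirDeriv, Finset.smul_sum, smul_comm c]

lemma dirDeriv_mul (b : Module.Basis ι F g) (a : Module.Dual F g) (f p : MvPolynomial ι F) :
    dirDeriv b a (f * p) = dirDeriv b a f * p + f * dirDeriv b a p := by
  simp only [dirDeriv, pderiv_mul, smul_add, Finset.sum_add_distrib, Finset.sum_mul,
    Finset.mul_sum, smul_mul_assoc, mul_smul_comm]

lemma pderiv_dirDeriv (b : Module.Basis ι F g) (a : Module.Dual F g) (i : ι) (f : MvPolynomial ι F) :
    pderiv i (dirDeriv b a f) = dirDeriv b a (pderiv i f) := by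
  simp [dirDeriv, map_sum, map_smul, pderiv_comm' i]

lemma pderiv_linPoly (b : Module.Basis ι F g) (v : g) (i : ι) :
    pderiv i (linPoly b v) = C (b.repr v i) := by
  simp [linPoly, map_sum, pderiv_C_mul, pderiv_X, Pi.single_apply,
    Finset.sum_ite_eq', mul_ite]

lemma dirDeriv_linPoly (b : Module.Basis ι F g) (a : Module.Dual F g) (v : g) :
    dirDeriv b a (linPoly b v) = C (a v) := by
  rw [dirDeriv]
  simp only [pderiv_linPoly]
  rw [show a v = a (∑ i, b.repr v i • b i) by rw [Module.Basis.sum_repr]]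
  simp [Finset.mul_sum, Algebra.smul_def, algebraMap_eq, mul_comm]
  simp_rw [← map_mul]
  rw [← map_sum]
  congr 1
  conv_rhs => rw [← b.sum_repr v, map_sum]
  exact Finset.sum_congr rfl fun i _ => by rw [map_smul, smul_eq_mul, mul_comm]

lemma linPoly_neg (b : Module.Basis ι F g) (v : g) : linPoly b (-v) = - linPoly b v := by
  simp [linPoly, Finset.sum_neg_distrib]

lemma dirDeriv_zero (b : Module.Basis ι F g) (a : Module.Dual F g) :
    dirDeriv b a (0 : MvPolynomial ι F) = 0 := by simp [dirDeriv]

lemma dirDeriv_C_mul (b : Module.Basis ι F g) (a : Module.Dual F g) (c : F) (f : MvPolynomial ι F) :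
    dirDeriv b a (C c * f) = C c * dirDeriv b a f := by
  rw [dirDeriv_mul, dirDeriv_C, zero_mul, zero_add]

lemma ell_antisym (b : Module.Basis ι F g) (i j : ι) :
    linPoly b ⁅b i, b j⁆ = - linPoly b ⁅b j, b i⁆ := by
  rw [← linPoly_neg, lie_skew]

/-- Key inductive relation along the direction `a`. -/
lemma key (b : Module.Basis ι F g) (a : Module.Dual F g) (H : MvPolynomial ι F)
    (hH : ∀ j, ∑ i, pderiv i H * linPoly b ⁅b i, b j⁆ = 0) :
    ∀ k j, ∑ i, pderiv i ((dirDeriv b a)^[k+1] H) * linPoly b ⁅b i, b j⁆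
      + C (((k+1 : ℕ) : F)) * ∑ i, pderiv i ((dirDeriv b a)^[k] H) * C (a ⁅b i, b j⁆) = 0 := by
  intro k
  induction k with
  | zero =>
    intro j
    have h := congrArg (dirDeriv b a) (hH j)
    rw [dirDeriv_sum, dirDeriv_zero] at h
    simp only [dirDeriv_mul, dirDeriv_linPoly, Finset.sum_add_distrib,
      ← pderiv_dirDeriv] at h
    simpa [Function.iterate_one, Nat.cast_one] using h
  | succ k ih =>
    intro j
    have h := congrArg (dirDeriv b a) (ih j)
    rw [dirDeriv_add, dirDeriv_sum, dirDeriv_C_mul, dirDeriv_sum, dirDeriv_zero] at h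
    simp only [dirDeriv_mul, dirDeriv_linPoly, dirDeriv_C, mul_zero, add_zero,
      Finset.sum_add_distrib, ← pderiv_dirDeriv, ← Function.iterate_succ_apply'] at h
    rw [show ((k+1+1 : ℕ) : F) = ((k+1 : ℕ) : F) + 1 by push_cast; ring, map_add, map_one]
    linear_combination h

lemma rearr1 (A B : ι → MvPolynomial ι F) (L : ι → ι → MvPolynomial ι F) :
    ∑ i, ∑ j, A i * B j * L i j = ∑ j, (∑ i, A i * L i j) * B j := by
  rw [Finset.sum_comm]
  refine Finset.sum_congr rfl fun j _ => ?_
  rw [Finset.sum_mul]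
  exact Finset.sum_congr rfl fun i _ => by ring

lemma rearr2 (A B : ι → MvPolynomial ι F) (L : ι → ι → MvPolynomial ι F)
    (hL : ∀ i j, L i j = - L j i) :
    ∑ i, ∑ j, A i * B j * L i j = - ∑ i, (∑ j, B j * L j i) * A i := by
  rw [← Finset.sum_neg_distrib]
  refine Finset.sum_congr rfl fun i _ => ?_
  rw [Finset.sum_mul, ← Finset.sum_neg_distrib]
  refine Finset.sum_congr rfl fun j _ => ?_
  rw [hL i j]; ring

lemma inv_coords (b : Module.Basis ι F g) (H : MvPolynomial ι F)
    (hH : ∀ x : g, kirillovBracket b H (linPoly b x) = 0) (j : ι) :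
    ∑ i, pderiv i H * linPoly b ⁅b i, b j⁆ = 0 := by
  have h := hH (b j)
  simp only [kirillovBracket, pderiv_linPoly, Module.Basis.repr_self, Finsupp.single_apply] at h
  simpa [apply_ite, mul_ite, Finset.sum_ite_eq] using h

noncomputable def CP (b : Module.Basis ι F g) (a : Module.Dual F g)
    (Fp Gp : MvPolynomial ι F) (k m : ℕ) : MvPolynomial ι F :=
  ∑ i, ∑ j, pderiv i ((dirDeriv b a)^[k] Fp) * pderiv j ((dirDeriv b a)^[m] Gp)
    * C (a ⁅b i, b j⁆)

lemma alpha_antisym (b : Module.Basis ι F g) (a : Module.Dual F g) (i j : ι) :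
    (C (a ⁅b i, b j⁆) : MvPolynomial ι F) = - C (a ⁅b j, b i⁆) := by
  rw [← lie_skew, map_neg, map_neg]


/-- argument shift method: if F, G are invariants of the
coadjoint representation (i.e. {F,x} = 0 = {G,x} for all x ∈ 𝔤), then all
directional derivatives ∂_a^k F, ∂_a^m G pairwise Poisson-commute. -/
theorem shifts_of_invariants_poisson_commute
    (b : Module.Basis ι F g) (a : Module.Dual F g)
    (Fp Gp : MvPolynomial ι F)
    (hF : ∀ x : g, kirillovBracket b Fp (linPoly b x) = 0)
    (hG : ∀ x : g, kirillovBracket b Gp (linPoly b x) = 0) :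
    ∀ k m : ℕ,
      kirillovBracket b ((dirDeriv b a)^[k] Fp) ((dirDeriv b a)^[m] Gp) = 0 := by
  have hFb := inv_coords b Fp hF
  have hGb := inv_coords b Gp hG
  have keyF := key b a Fp hFb
  have keyG := key b a Gp hGb
  have R0F : ∀ m, kirillovBracket b Fp ((dirDeriv b a)^[m] Gp) = 0 := by
    intro m
    rw [kirillovBracket, rearr1]
    simp [hFb]
  have R0G : ∀ k, kirillovBracket b ((dirDeriv b a)^[k] Fp) Gp = 0 := by
    intro k
    rw [kirillovBracket, rearr2 _ _ _ (fun i j => ell_antisym b i j)]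
    simp [hGb]
  have R1 : ∀ k m, kirillovBracket b ((dirDeriv b a)^[k+1] Fp) ((dirDeriv b a)^[m] Gp)
      + C (((k+1:ℕ):F)) * CP b a Fp Gp k m = 0 := by
    intro k m
    rw [kirillovBracket, rearr1]
    have hS : ∀ j, (∑ i, pderiv i ((dirDeriv b a)^[k+1] Fp) * linPoly b ⁅b i, b j⁆)
        = - (C (((k+1:ℕ):F)) * ∑ i, pderiv i ((dirDeriv b a)^[k] Fp) * C (a ⁅b i, b j⁆)) :=
      fun j => eq_neg_of_add_eq_zero_left (keyF k j)
    simp only [hS]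
    rw [show CP b a Fp Gp k m
        = ∑ j, (∑ i, pderiv i ((dirDeriv b a)^[k] Fp) * C (a ⁅b i, b j⁆))
            * pderiv j ((dirDeriv b a)^[m] Gp) from rearr1 _ _ _]
    rw [Finset.mul_sum, ← Finset.sum_add_distrib]
    exact Finset.sum_eq_zero fun j _ => by ring
  have R2 : ∀ k m, kirillovBracket b ((dirDeriv b a)^[k] Fp) ((dirDeriv b a)^[m+1] Gp)
      + C (((m+1:ℕ):F)) * CP b a Fp Gp k m = 0 := by
    intro k m
    rw [kirillovBracket, rearr2 _ _ _ (fun i j => ell_antisym b i j)]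
    have hS : ∀ i, (∑ j, pderiv j ((dirDeriv b a)^[m+1] Gp) * linPoly b ⁅b j, b i⁆)
        = - (C (((m+1:ℕ):F)) * ∑ j, pderiv j ((dirDeriv b a)^[m] Gp) * C (a ⁅b j, b i⁆)) :=
      fun i => eq_neg_of_add_eq_zero_left (keyG m i)
    simp only [hS]
    rw [show CP b a Fp Gp k m
        = - ∑ i, (∑ j, pderiv j ((dirDeriv b a)^[m] Gp) * C (a ⁅b j, b i⁆))
            * pderiv i ((dirDeriv b a)^[k] Fp) from
      rearr2 _ _ _ (fun i j => alpha_antisym b a i j)]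
    rw [mul_neg, ← neg_add, neg_eq_zero, Finset.mul_sum, ← Finset.sum_add_distrib]
    exact Finset.sum_eq_zero fun i _ => by ring
  have cast_ne : ∀ n : ℕ, (C (((n+1:ℕ):F)) : MvPolynomial ι F) ≠ 0 := by
    intro n h
    exact (Nat.cast_ne_zero (R := F)).mpr (Nat.succ_ne_zero n) (MvPolynomial.C_eq_zero.mp h)
  have hCP : ∀ m k, CP b a Fp Gp k m = 0 := by
    intro m
    induction m with
    | zero =>
      intro k
      have h := R1 k 0
      simp only [Function.iterate_zero, id_eq] at h
      rw [R0G (k+1), zero_add] at h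
      rcases mul_eq_zero.mp h with h' | h'
      · exact absurd h' (cast_ne k)
      · exact h'
    | succ m ihm =>
      intro k
      have h2 := R2 (k+1) m
      rw [ihm (k+1), mul_zero, add_zero] at h2
      have h1 := R1 k (m+1)
      rw [h2, zero_add] at h1
      rcases mul_eq_zero.mp h1 with h' | h'
      · exact absurd h' (cast_ne k)
      · exact h'
  intro k m
  rcases k with _ | k
  · simpa using R0F m
  · have h := R1 k m
    rw [hCP m k, mul_zero, add_zero] at h
    exact h
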